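/- Let A be a mutually uncorrelated set of M words, each of length n ≥ 1, over the four-letter DNA alphabet {A,T,G,C}, and let c_ℓ = |C_A(ℓ)| be the number of words of length ℓ over {A,T,G,C} avoiding every word of A as a contiguous substring. Then c_ℓ = 4^ℓ for 0 ≤ ℓ ≤ n−1, and c_ℓ = 4·c_{ℓ−1} − M·c_{ℓ−n} for every ℓ ≥ n. -/

import Mathlib

/-- The four-letter DNA alphabet. -/
inductive DNA | A | T | G | C
deriving DecidableEq

/-- Hamming distance between two words (of equal length) given as lists. -/
def hammingD {α : Type*} [DecidableEq α] (x y : List α) : ℕ :=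
  (x.zip y).countP (fun p => decide (p.1 ≠ p.2))

/-- A binary word has `D`-bounded running digital sum if in every prefix the
numbers of ones and zeros differ by at most `D`. -/
def brds (D : ℕ) (w : List Bool) : Prop :=
  ∀ k ≤ w.length,
    (((w.take k).count true : ℤ) - ((w.take k).count false : ℤ)).natAbs ≤ D

/-- The letters `G`, `C` of the DNA alphabet. -/
def isGC : DNA → Bool
  | DNA.G => true
  | DNA.C => true
  | _ => false

/-- A DNA word is `D`-GC-prefix-balanced if in every prefix the number of
letters from {G,C} and the number of letters from {A,T} differ by at most `D`. -/
def gcpb (D : ℕ) (w : List DNA) : Prop :=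
  ∀ k ≤ w.length,
    (((w.take k).countP isGC : ℤ) - ((w.take k).countP (fun c => !(isGC c)) : ℤ)).natAbs ≤ D

/-- A word is self-uncorrelated if no proper nonempty prefix equals the suffix
of the same length. -/
def selfUncorr {α : Type*} (w : List α) : Prop :=
  ∀ k, 1 ≤ k → k ≤ w.length - 1 → w.take k ≠ w.drop (w.length - k)

/-- A set of words is mutually uncorrelated if every word is self-uncorrelated
and for every ordered pair of distinct words `x`, `y` no nonempty prefix of `y`
equals a suffix of `x` of the same length. -/
def mutUncorr {α : Type*} (S : Set (List α)) : Prop :=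
  (∀ w ∈ S, selfUncorr w) ∧
  ∀ x ∈ S, ∀ y ∈ S, x ≠ y →
    ∀ k, 1 ≤ k → k ≤ x.length → y.take k ≠ x.drop (x.length - k)

/-- A Dyck word: equal numbers of ones and zeros, and every prefix has at least
as many ones as zeros. -/
def isDyck (w : List Bool) : Prop :=
  w.count true = w.count false ∧
  ∀ k ≤ w.length, (w.take k).count false ≤ (w.take k).count true

/-- The height of a (Dyck) word is at most `D`: in every prefix the number of
ones exceeds the number of zeros by at most `D`. -/
def heightLe (D : ℕ) (w : List Bool) : Prop :=
  ∀ k ≤ w.length, ((w.take k).count true : ℤ) - ((w.take k).count false : ℤ) ≤ (D : ℤ)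

/-- `avoidCount A ℓ`: the number of DNA words of length `ℓ` containing no word
of `A` as a contiguous substring. -/
noncomputable def avoidCount (A : Finset (List DNA)) (l : ℕ) : ℕ :=
  Set.ncard {w : List DNA | w.length = l ∧ ∀ a ∈ A, ¬ a <:+: w}


-- auxiliary
instance : Fintype DNA :=
  ⟨{DNA.A, DNA.T, DNA.G, DNA.C}, by intro x; cases x <;> simp⟩

lemma card_DNA : Fintype.card DNA = 4 := rfl

lemma ncard_len (l : ℕ) : Set.ncard {w : List DNA | w.length = l} = 4 ^ l := by
  rw [← Nat.card_coe_set_eq]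
  have : Nat.card (List.Vector DNA l) = 4 ^ l := by
    rw [Nat.card_eq_fintype_card, card_vector, card_DNA]
  exact this

lemma ncard_prod' {α β : Type*} (s : Set α) (t : Set β) :
    (s ×ˢ t).ncard = s.ncard * t.ncard := by
  rw [← Nat.card_coe_set_eq, ← Nat.card_coe_set_eq, ← Nat.card_coe_set_eq,
    Nat.card_congr (Equiv.Set.prod s t), Nat.card_prod]

def Av (A : Finset (List DNA)) (l : ℕ) : Set (List DNA) :=
  {w : List DNA | w.length = l ∧ ∀ a ∈ A, ¬ a <:+: w}

lemma Av_finite (A : Finset (List DNA)) (l : ℕ) : (Av A l).Finite :=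
  (List.finite_length_eq DNA l).subset (fun _ hw => hw.1)

-- The key "no new bad occurrence" lemma
lemma no_bad {n : ℕ} (hn : 1 ≤ n) (A : Finset (List DNA))
    (hlen : ∀ w ∈ A, w.length = n) (hmu : mutUncorr (A : Set (List DNA)))
    {a u : List DNA} (ha : a ∈ A) (hu : ∀ b ∈ A, ¬ b <:+: u) :
    ∀ b ∈ A, ¬ b <:+: (u ++ a).dropLast := by
  have han : a.length = n := hlen a ha
  have hane : a ≠ [] := by intro h; rw [h] at han; simp at han; omega
  rw [List.dropLast_append_of_ne_nil (l' := u) hane]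
  rintro b hb ⟨s, t, hst⟩
  have hbn : b.length = n := hlen b hb
  have hlens : s.length + b.length + t.length = u.length + (a.length - 1) := by
    have := congrArg List.length hst
    simpa [add_assoc] using this
  rw [hbn, han] at hlens
  by_cases hcase : s.length + n ≤ u.length
  · -- b is an infix of u
    refine hu b hb ?_
    have h1 : s ++ b <+: u ++ a.dropLast := ⟨t, hst⟩
    have h2 : u <+: u ++ a.dropLast := List.prefix_append _ _
    have h3 : s ++ b <+: u := List.prefix_of_prefix_length_le h1 h2
      (by simp only [List.length_append, hbn]; omega)
    exact List.IsInfix.trans ⟨s, [], by simp⟩ h3.isInfix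
  · push_neg at hcase
    obtain ⟨k, hk⟩ : ∃ k, k = s.length + n - u.length := ⟨_, rfl⟩
    have hk1 : 1 ≤ k := by omega
    have hk2 : k ≤ n - 1 := by omega
    have hst' : s ++ (b ++ t) = u ++ a.dropLast := by
      rw [← List.append_assoc]; exact hst
    have hW1 : (u ++ a.dropLast).drop s.length = b ++ t := by
      rw [← hst']; exact List.drop_left (l₁ := s) (l₂ := b ++ t)
    have hWb : b = ((u ++ a.dropLast).drop s.length).take n := by
      rw [hW1, ← hbn, List.take_left]
    have key : b.drop (n - k) = a.take k := by
      have h4 := congrArg (List.drop (n - k)) hWb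
      rw [List.drop_take, List.drop_drop] at h4
      have e1 : s.length + (n - k) = u.length := by omega
      have e2 : n - (n - k) = k := by omega
      rw [e1, e2, List.drop_left] at h4
      rw [h4, List.dropLast_eq_take, List.take_take]
      congr 1
      rw [han]
      omega
    by_cases hab : b = a
    · subst hab
      refine hmu.1 b (by exact_mod_cast hb) k hk1 (by rw [hbn]; omega) ?_
      rw [hbn]
      exact key.symm
    · refine hmu.2 b (by exact_mod_cast hb) a (by exact_mod_cast ha) hab k hk1
        (by rw [hbn]; omega) ?_
      rw [hbn]
      exact key.symm

lemma key_rec {n M : ℕ} (hn : 1 ≤ n) (A : Finset (List DNA))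
    (hcard : A.card = M) (hlen : ∀ w ∈ A, w.length = n)
    (hmu : mutUncorr (A : Set (List DNA))) {l : ℕ} (hl : n ≤ l) :
    4 * avoidCount A (l - 1) = avoidCount A l + M * avoidCount A (l - n) := by
  have hl1 : 1 ≤ l := le_trans hn hl
  set E : Set (List DNA) :=
    {v : List DNA | v.length = l ∧ ∀ b ∈ A, ¬ b <:+: v.dropLast} with hE
  -- E as image of DNA × Av (l-1)
  have hEim : E = (fun p : DNA × List DNA => p.2 ++ [p.1]) ''
      ((Set.univ : Set DNA) ×ˢ Av A (l - 1)) := by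
    ext v
    constructor
    · rintro ⟨hvl, hvav⟩
      have hvne : v ≠ [] := by intro h; rw [h] at hvl; simp at hvl; omega
      refine ⟨(v.getLast hvne, v.dropLast), ⟨trivial, ?_, hvav⟩, ?_⟩
      · rw [List.length_dropLast, hvl]
      · exact List.dropLast_concat_getLast hvne
    · rintro ⟨⟨x, w⟩, ⟨-, hwl, hwav⟩, rfl⟩
      refine ⟨?_, by simpa using hwav⟩
      simp only [List.length_append, List.length_cons, List.length_nil, hwl]
      omega
  have hEinj : Set.InjOn (fun p : DNA × List DNA => p.2 ++ [p.1])
      ((Set.univ : Set DNA) ×ˢ Av A (l - 1)) := by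
    rintro ⟨x, w⟩ - ⟨x', w'⟩ - h
    simp only at h
    have h1 : w = w' := by
      have := congrArg List.dropLast h; simpa using this
    have h2 : x = x' := by
      have := congrArg (fun z => z.getLast?) h
      subst h1
      simpa using this
    simp [h1, h2]
  have hEcard : E.ncard = 4 * avoidCount A (l - 1) := by
    rw [hEim, Set.ncard_image_of_injOn hEinj, ncard_prod', Set.ncard_univ,
      Nat.card_eq_fintype_card, card_DNA]
    rfl
  -- E as a disjoint union
  set B : Set (List DNA) := (fun p : List DNA × List DNA => p.2 ++ p.1) ''
      ((A : Set (List DNA)) ×ˢ Av A (l - n)) with hB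
  have hBsub : ∀ v ∈ B, ∃ a ∈ A, a <:+ v := by
    rintro v ⟨⟨a, u⟩, ⟨ha, hul, -⟩, rfl⟩
    exact ⟨a, ha, u, rfl⟩
  have hEuni : E = Av A l ∪ B := by
    ext v
    constructor
    · rintro ⟨hvl, hvav⟩
      by_cases hva : ∀ a ∈ A, ¬ a <:+: v
      · exact Or.inl ⟨hvl, hva⟩
      · push_neg at hva
        obtain ⟨a, ha, s, t, hst⟩ := hva
        have han : a.length = n := hlen a ha
        have hane : a ≠ [] := by intro h; rw [h] at han; simp at han; omega
        have ht : t = [] := by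
          by_contra htne
          refine hvav a ha ?_
          rw [← hst, List.dropLast_append_of_ne_nil (l' := s ++ a) htne]
          exact ⟨s, t.dropLast, rfl⟩
        rw [ht, List.append_nil] at hst
        have hsl : s.length = l - n := by
          have := congrArg List.length hst
          simp only [List.length_append, han, hvl] at this
          omega
        have hsav : s ∈ Av A (l - n) := by
          refine ⟨hsl, fun b hb hbs => hvav b hb (hbs.trans ?_)⟩
          have h1 : s <+: v.dropLast := by
            rw [← hst, List.dropLast_append_of_ne_nil (l' := s) hane]
            exact List.prefix_append _ _
          exact h1.isInfix
        exact Or.inr ⟨(a, s), ⟨ha, hsav⟩, hst⟩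
    · rintro (⟨hvl, hvav⟩ | hv)
      · exact ⟨hvl, fun b hb hbi => hvav b hb (hbi.trans (List.dropLast_prefix v).isInfix)⟩
      · obtain ⟨⟨a, u⟩, ⟨ha, hul, huav⟩, rfl⟩ := hv
        refine ⟨?_, no_bad hn A hlen hmu ha huav⟩
        simp only [List.length_append, hul, hlen a ha]
        omega
  have hdisj : Disjoint (Av A l) B := by
    rw [Set.disjoint_left]
    rintro v ⟨-, hvav⟩ hvB
    obtain ⟨a, ha, hsuf⟩ := hBsub v hvB
    exact hvav a ha hsuf.isInfix
  have hBinj : Set.InjOn (fun p : List DNA × List DNA => p.2 ++ p.1)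
      ((A : Set (List DNA)) ×ˢ Av A (l - n)) := by
    rintro ⟨a, u⟩ ⟨ha, hul, -⟩ ⟨a', u'⟩ ⟨ha', hul', -⟩ h
    simp only at h
    obtain ⟨h1, h2⟩ := List.append_inj h (by rw [hul, hul'])
    simp [h1, h2]
  have hBcard : B.ncard = M * avoidCount A (l - n) := by
    rw [hB, Set.ncard_image_of_injOn hBinj, ncard_prod', Set.ncard_coe_finset, hcard]
    rfl
  have hBfin : B.Finite := ((A.finite_toSet.prod (Av_finite A (l - n)))).image _
  have hfinal : E.ncard = avoidCount A l + M * avoidCount A (l - n) := by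
    rw [hEuni, Set.ncard_union_eq hdisj (Av_finite A l) hBfin, hBcard]
    rfl
  rw [← hEcard, hfinal]

/-- for a mutually uncorrelated set `A` of `M` words of length
`n`, the counts `c_ℓ = |C_A(ℓ)|` satisfy `c_ℓ = 4^ℓ` for `ℓ ≤ n-1` and
`c_ℓ = 4 c_{ℓ-1} - M c_{ℓ-n}` for `ℓ ≥ n`. -/
theorem stmt12 (n M : ℕ) (hn : 1 ≤ n) (A : Finset (List DNA))
    (hcard : A.card = M) (hlen : ∀ w ∈ A, w.length = n)
    (hmu : mutUncorr (A : Set (List DNA))) :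
    (∀ l : ℕ, l ≤ n - 1 → avoidCount A l = 4 ^ l) ∧
    ∀ l : ℕ, n ≤ l →
      (avoidCount A l : ℤ) =
        4 * (avoidCount A (l - 1) : ℤ) - (M : ℤ) * (avoidCount A (l - n) : ℤ) := by
  constructor
  · intro l hl
    have hln : l < n := by omega
    have hset : {w : List DNA | w.length = l ∧ ∀ a ∈ A, ¬ a <:+: w}
        = {w : List DNA | w.length = l} := by
      ext w
      simp only [Set.mem_setOf_eq, and_iff_left_iff_imp]
      intro hwl a ha hinf
      have := hinf.length_le
      rw [hwl, hlen a ha] at this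
      omega
    rw [avoidCount, hset, ncard_len]
  · intro l hl
    have h0 := key_rec hn A hcard hlen hmu hl
    have h := congrArg (fun x : ℕ => (x : ℤ)) h0
    push_cast at h
    linarith
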